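/- (L¹-continuity in time of the characteristics formula, Fact 8.) Let T > 0, x ∈ C⁰([0,T]), D ∈ L^∞([0,T];[0,∞)), f₀ ∈ C⁰([0,∞)) ∩ L¹([0,∞)), and let β : [0,∞) → [0,∞) be bounded continuous, with f₀(0) = x(0). Define f(t,a) = f₀(a−t)·exp(−∫₀^t D(s)ds − ∫_{a−t}^a β(s)ds) for 0 ≤ t ≤ a and f(t,a) = x(t−a)·exp(−∫_{t−a}^t D(s)ds − ∫₀^a β(s)ds) for t > a ≥ 0. Then the map t ↦ f[t] = f(t,·) is continuous from [0,T] into L¹([0,∞)), i.e., for every t₀ ∈ [0,T] one has ∫₀^∞ |f(t,a) − f(t₀,a)| da → 0 as t → t₀ in [0,T]. -/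

import Mathlib

open MeasureTheory Set Filter

/-- **L¹-continuity in time of the characteristics formula (Fact 8).** With `f` defined
by the characteristics formula (4.1) from boundary data `x ∈ C⁰([0,T])`, initial data
`f₀ ∈ C⁰([0,∞)) ∩ L¹([0,∞))` (with `f₀(0) = x(0)`), dilution `D ∈ L^∞([0,T];[0,∞))` and
bounded continuous mortality `β ≥ 0`, the map `t ↦ f[t] = f(t,·)` is continuous from
`[0,T]` into `L¹([0,∞))`. -/
lemma translate_L1_tendsto (F : ℝ → ℝ) (hF : Integrable F) :
    Tendsto (fun t : ℝ => ∫ a, |F (a - t) - F a|) (nhds 0) (nhds 0) := by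
  have hnn : ∀ t : ℝ, 0 ≤ ∫ a, |F (a - t) - F a| :=
    fun t => integral_nonneg fun a => abs_nonneg _
  rw [Metric.tendsto_nhds]
  intro ε hε
  obtain ⟨g, hg_supp, hFg, hg_cont, hg_int⟩ :=
    hF.exists_hasCompactSupport_integral_sub_le (show (0:ℝ) < ε/4 by linarith)
  obtain ⟨R, hR0, hR⟩ := hg_supp.isBounded.subset_closedBall_lt 0 0
  obtain ⟨C, hC⟩ := (isCompact_closedBall (0:ℝ) R).exists_bound_of_continuousOn
    hg_cont.continuousOn
  have hC0 : 0 ≤ C := le_trans (norm_nonneg _) (hC 0 (Metric.mem_closedBall_self hR0.le))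
  have hgb : ∀ a : ℝ, |g a| ≤ C := by
    intro a
    by_cases ha : a ∈ Metric.closedBall (0:ℝ) R
    · simpa using hC a ha
    · have : g a = 0 := image_eq_zero_of_notMem_tsupport fun h => ha (hR h)
      simp [this, hC0]
  have hmid : Tendsto (fun t : ℝ => ∫ a, |g (a - t) - g a|) (nhds 0) (nhds 0) := by
    have hdct : Tendsto (fun t : ℝ => ∫ a, |g (a - t) - g a|) (nhds 0)
        (nhds (∫ (_ : ℝ), (0:ℝ))) := by
      apply tendsto_integral_filter_of_dominated_convergence
        (bound := fun a => (Metric.closedBall (0:ℝ) (R+1)).indicator (fun _ => 2*C) a)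
      · filter_upwards with t
        exact (((hg_cont.comp (continuous_id.sub continuous_const)).sub
          hg_cont).abs).aestronglyMeasurable
      · filter_upwards [Metric.closedBall_mem_nhds (0:ℝ) one_pos] with t ht
        filter_upwards with a
        by_cases ha : a ∈ Metric.closedBall (0:ℝ) (R+1)
        · rw [indicator_of_mem ha]
          have h1 := hgb (a - t); have h2 := hgb a
          rw [Real.norm_eq_abs, abs_abs]
          calc |g (a-t) - g a| ≤ |g (a-t)| + |g a| := abs_sub _ _
          _ ≤ 2*C := by linarith
        · rw [indicator_of_notMem ha]
          have haR : R + 1 < |a| := by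
            simp only [Metric.mem_closedBall, Real.dist_eq, sub_zero, not_le] at ha
            exact ha
          have hga : g a = 0 := by
            apply image_eq_zero_of_notMem_tsupport
            intro h
            have := hR h
            simp only [Metric.mem_closedBall, Real.dist_eq, sub_zero] at this
            linarith
          have hgat : g (a - t) = 0 := by
            apply image_eq_zero_of_notMem_tsupport
            intro h
            have h1 := hR h
            simp only [Metric.mem_closedBall, Real.dist_eq, sub_zero] at h1 ht
            have h2 : |a| ≤ |a - t| + |t| := by
              calc |a| = |(a - t) + t| := by ring_nf
              _ ≤ |a - t| + |t| := abs_add_le _ _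
            linarith
          simp [hga, hgat]
      · exact (integrableOn_const measure_closedBall_lt_top.ne).integrable_indicator
          measurableSet_closedBall
      · filter_upwards with a
        have h1 : Tendsto (fun t : ℝ => g (a - t)) (nhds 0) (nhds (g a)) := by
          have h2 : Tendsto (fun t : ℝ => a - t) (nhds 0) (nhds a) := by
            have h3 : Tendsto (fun t : ℝ => a - t) (nhds 0) (nhds (a - 0)) :=
              (continuous_const.sub continuous_id).tendsto (0:ℝ)
            rwa [sub_zero] at h3
          exact (hg_cont.tendsto a).comp h2
        have := (h1.sub (tendsto_const_nhds (x := g a))).abs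
        simpa using this
    simpa using hdct
  have hFgt : ∀ t : ℝ, (∫ a, |F (a - t) - g (a - t)|) = ∫ a, |F a - g a| :=
    fun t => integral_sub_right_eq_self (fun a => |F a - g a|) t
  have hFgabs : (∫ a, |F a - g a|) ≤ ε/4 := by
    calc (∫ a, |F a - g a|) = ∫ a, ‖F a - g a‖ := by simp [Real.norm_eq_abs]
    _ ≤ ε/4 := hFg
  rw [Metric.tendsto_nhds] at hmid
  filter_upwards [hmid (ε/4) (by linarith)] with t hmt
  rw [Real.dist_eq, sub_zero, abs_of_nonneg (hnn t)]
  rw [Real.dist_eq, sub_zero,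
    abs_of_nonneg (integral_nonneg (fun a => abs_nonneg (g (a-t) - g a)))] at hmt
  have iF : Integrable (fun a => F (a - t)) := hF.comp_sub_right t
  have ig : Integrable (fun a => g (a - t)) := hg_int.comp_sub_right t
  have i1 : Integrable (fun a => |F (a-t) - g (a-t)|) := (iF.sub ig).abs
  have i2 : Integrable (fun a => |g (a-t) - g a|) := (ig.sub hg_int).abs
  have i3 : Integrable (fun a => |g a - F a|) := (hg_int.sub hF).abs
  have key : (∫ a, |F (a - t) - F a|) ≤
      (∫ a, |F (a-t) - g (a-t)|) + ((∫ a, |g (a-t) - g a|) + ∫ a, |g a - F a|) := by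
    have e1 : (∫ a, (|F (a-t) - g (a-t)| + (|g (a-t) - g a| + |g a - F a|)))
        = (∫ a, |F (a-t) - g (a-t)|) + ((∫ a, |g (a-t) - g a|) + ∫ a, |g a - F a|) := by
      have i23 : Integrable (fun a => |g (a-t) - g a| + |g a - F a|) := i2.add i3
      rw [integral_add i1 i23, integral_add i2 i3]
    rw [← e1]
    apply integral_mono_of_nonneg (Eventually.of_forall fun a => abs_nonneg _)
      (i1.add (i2.add i3))
    filter_upwards with a
    calc |F (a-t) - F a| = |(F (a-t) - g (a-t)) + ((g (a-t) - g a) + (g a - F a))| := by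
          ring_nf
    _ ≤ |F (a-t) - g (a-t)| + |(g (a-t) - g a) + (g a - F a)| := abs_add_le _ _
    _ ≤ _ := add_le_add le_rfl (abs_add_le _ _)
  have h3 : (∫ a, |g a - F a|) ≤ ε/4 := by
    calc (∫ a, |g a - F a|) = ∫ a, |F a - g a| := by simp_rw [abs_sub_comm]
    _ ≤ ε/4 := hFgabs
  calc (∫ a, |F (a - t) - F a|) ≤ _ := key
  _ < ε := by rw [hFgt]; linarith

theorem characteristics_formula_L1_continuity
    (T : ℝ) (hT : 0 < T)
    (x : ℝ → ℝ) (hx : ContinuousOn x (Icc 0 T))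
    (D : ℝ → ℝ) (hDm : Measurable D) (hDn : ∀ t, 0 ≤ D t)
    (hDb : ∃ C, ∀ t ∈ Icc (0:ℝ) T, D t ≤ C)
    (f₀ : ℝ → ℝ) (hf₀c : ContinuousOn f₀ (Ici 0)) (hf₀i : IntegrableOn f₀ (Ioi 0))
    (β : ℝ → ℝ) (hβc : ContinuousOn β (Ici 0)) (hβn : ∀ a, 0 ≤ a → 0 ≤ β a)
    (hβb : ∃ C, ∀ a, 0 ≤ a → β a ≤ C)
    (hx0 : f₀ 0 = x 0)
    (f : ℝ → ℝ → ℝ)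
    (hf : ∀ t a, f t a =
      if t ≤ a then
        f₀ (a - t) * Real.exp (-(∫ s in (0:ℝ)..t, D s) - ∫ s in (a - t)..a, β s)
      else
        x (t - a) * Real.exp (-(∫ s in (t - a)..t, D s) - ∫ s in (0:ℝ)..a, β s)) :
    ∀ t₀ ∈ Icc 0 T,
      Tendsto (fun t => ∫ a in Ioi (0:ℝ), |f t a - f t₀ a|)
        (nhdsWithin t₀ (Icc 0 T)) (nhds 0) := by
  intro t₀ ht₀
  -- bounds on x and f₀
  obtain ⟨Cx, hCx⟩ := (isCompact_Icc (a := (0:ℝ)) (b := T)).exists_bound_of_continuousOn hx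
  have hCx0 : 0 ≤ Cx := le_trans (norm_nonneg _) (hCx 0 ⟨le_refl 0, hT.le⟩)
  obtain ⟨M, hM⟩ := (isCompact_Icc (a := (0:ℝ)) (b := 1)).exists_bound_of_continuousOn
    (hf₀c.mono (fun y hy => hy.1))
  have hM0 : 0 ≤ M := le_trans (norm_nonneg _) (hM 0 ⟨le_refl 0, one_pos.le⟩)
  -- the extended initial datum
  set F : ℝ → ℝ := (Ici (0:ℝ)).indicator f₀ with hFdef
  have hFeq : ∀ u : ℝ, 0 ≤ u → F u = f₀ u := fun u hu => indicator_of_mem hu f₀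
  have hFeq0 : ∀ u : ℝ, u < 0 → F u = 0 :=
    fun u hu => indicator_of_notMem (by simpa using hu) f₀
  have hf₀Ici : IntegrableOn f₀ (Ici 0) := by
    rwa [integrableOn_Ici_iff_integrableOn_Ioi]
  have hFi : Integrable F := (integrable_indicator_iff measurableSet_Ici).2 hf₀Ici
  -- the primitive of β
  have hβI : ∀ u v : ℝ, 0 ≤ u → 0 ≤ v → IntervalIntegrable β volume u v := by
    intro u v hu hv
    apply ContinuousOn.intervalIntegrable
    exact hβc.mono (fun y hy => le_trans (le_min hu hv) hy.1)
  set B : ℝ → ℝ := fun r => ∫ s in (0:ℝ)..r, β s with hBdef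
  have hBsub : ∀ u v : ℝ, 0 ≤ u → 0 ≤ v → (∫ s in u..v, β s) = B v - B u := by
    intro u v hu hv
    exact (intervalIntegral.integral_interval_sub_left (hβI 0 v le_rfl hv)
      (hβI 0 u le_rfl hu)).symm
  have hβIcc : ∀ r : ℝ, 0 ≤ r → IntegrableOn β (Icc 0 r) :=
    fun r hr => (hβc.mono (fun y hy => hy.1)).integrableOn_compact isCompact_Icc
  have hBc : ∀ r : ℝ, 0 ≤ r → ContinuousWithinAt B (Ici 0) r := by
    intro r hr
    have h1 : ContinuousOn B (uIcc 0 (r+1)) :=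
      intervalIntegral.continuousOn_primitive_interval
        (by rw [uIcc_of_le (by linarith)]; exact hβIcc (r+1) (by linarith))
    rw [uIcc_of_le (by linarith)] at h1
    have h2 : ContinuousWithinAt B (Icc 0 (r+1)) r := h1 r ⟨hr, by linarith⟩
    apply h2.mono_of_mem_nhdsWithin
    rw [← Ici_inter_Iic]
    exact inter_mem_nhdsWithin _ (Iic_mem_nhds (by linarith))
  -- the primitive of D
  obtain ⟨CD, hCD⟩ := hDb
  have hDIcc : IntegrableOn D (Icc 0 T) := by
    apply Integrable.mono' (g := fun _ => CD)
      (integrableOn_const measure_Icc_lt_top.ne)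
      (hDm.aestronglyMeasurable.restrict)
    rw [ae_restrict_iff' measurableSet_Icc]
    exact ae_of_all _ fun s hs => by
      rw [Real.norm_eq_abs, abs_of_nonneg (hDn s)]; exact hCD s hs
  have hDI : ∀ u v : ℝ, u ∈ Icc (0:ℝ) T → v ∈ Icc (0:ℝ) T →
      IntervalIntegrable D volume u v := by
    intro u v hu hv
    apply MeasureTheory.IntegrableOn.intervalIntegrable
    apply hDIcc.mono_set
    intro y hy
    exact ⟨le_trans (le_min hu.1 hv.1) hy.1, le_trans hy.2 (max_le hu.2 hv.2)⟩
  set Dint : ℝ → ℝ := fun t => ∫ s in (0:ℝ)..t, D s with hDintdef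
  have hDc : ContinuousOn Dint (Icc 0 T) := by
    have h1 := intervalIntegral.continuousOn_primitive_interval (f := D) (μ := volume)
      (a := (0:ℝ)) (b := T) (by rw [uIcc_of_le hT.le]; exact hDIcc)
    rwa [uIcc_of_le hT.le] at h1
  have hDsub : ∀ t a : ℝ, 0 ≤ a → 0 ≤ t - a → t ∈ Icc (0:ℝ) T →
      (∫ s in (t-a)..t, D s) = Dint t - Dint (t-a) := by
    intro t a ha hta ht
    exact (intervalIntegral.integral_interval_sub_left (hDI 0 t ⟨le_rfl, hT.le⟩ ht)
      (hDI 0 (t-a) ⟨le_rfl, hT.le⟩ ⟨hta, by linarith [ht.2]⟩)).symm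
  -- nonnegativity of the exponents
  have hDnn : ∀ u v : ℝ, u ≤ v → 0 ≤ ∫ s in u..v, D s :=
    fun u v h => intervalIntegral.integral_nonneg h (fun s _ => hDn s)
  have hβnn : ∀ u v : ℝ, 0 ≤ u → u ≤ v → 0 ≤ ∫ s in u..v, β s :=
    fun u v hu h => intervalIntegral.integral_nonneg h (fun s hs => hβn s (le_trans hu hs.1))
  -- the survival factor
  set E : ℝ → ℝ → ℝ := fun t a => Real.exp (-Dint t - (B a - B (a - t))) with hEdef
  have hfE : ∀ t ∈ Icc (0:ℝ) T, ∀ a : ℝ, t ≤ a → f t a = F (a - t) * E t a := by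
    intro t ht a hta
    rw [hf, if_pos hta, hFeq _ (by linarith [ht.1]),
      hBsub (a-t) a (by linarith [ht.1]) (by linarith [ht.1])]
  have hE1 : ∀ t ∈ Icc (0:ℝ) T, ∀ a : ℝ, t ≤ a → E t a ≤ 1 := by
    intro t ht a hta
    have h1 : 0 ≤ Dint t := hDnn 0 t ht.1
    have h2 : 0 ≤ B a - B (a-t) := by
      rw [← hBsub (a-t) a (by linarith [ht.1]) (by linarith [ht.1])]
      exact hβnn (a-t) a (by linarith [ht.1]) (by linarith [ht.1])
    rw [hEdef]
    exact Real.exp_le_one_iff.2 (by linarith)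
  have hEpos : ∀ t a : ℝ, 0 < E t a := fun t a => Real.exp_pos _
  have hBon : ContinuousOn B (Ici 0) := fun r hr => hBc r hr
  have hEcont : ∀ t : ℝ, 0 ≤ t → ContinuousOn (E t) (Ici t) := by
    intro t htn
    apply Real.continuous_exp.comp_continuousOn
    apply ContinuousOn.sub continuousOn_const
    apply ContinuousOn.sub
    · exact hBon.mono (fun y (hy : t ≤ y) => le_trans htn hy)
    · exact hBon.comp ((continuous_id.sub continuous_const).continuousOn)
        (fun y (hy : t ≤ y) => by simp only [id, mem_Ici]; linarith)
  -- pointwise bound on |f t|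
  have hindIoc : ∀ a : ℝ, 0 ≤ (Ioc (0:ℝ) T).indicator (fun _ => (1:ℝ)) a :=
    fun a => indicator_nonneg (fun y _ => zero_le_one) a
  have hfb : ∀ t ∈ Icc (0:ℝ) T, ∀ a ∈ Ioi (0:ℝ),
      |f t a| ≤ |F (a - t)| + Cx * (Ioc (0:ℝ) T).indicator (fun _ => (1:ℝ)) a := by
    intro t ht a ha
    rw [mem_Ioi] at ha
    by_cases h : t ≤ a
    · rw [hfE t ht a h, abs_mul]
      have h1 : |E t a| ≤ 1 := by
        rw [abs_of_pos (hEpos t a)]; exact hE1 t ht a h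
      have h2 : |F (a-t)| * |E t a| ≤ |F (a-t)| * 1 :=
        mul_le_mul_of_nonneg_left h1 (abs_nonneg _)
      have h3 : 0 ≤ Cx * (Ioc (0:ℝ) T).indicator (fun _ => (1:ℝ)) a :=
        mul_nonneg hCx0 (hindIoc a)
      linarith
    · push_neg at h
      rw [hf, if_neg (not_le.mpr h)]
      have hta : t - a ∈ Icc (0:ℝ) T := ⟨by linarith, by linarith [ht.2]⟩
      have hxb : |x (t-a)| ≤ Cx := by simpa [Real.norm_eq_abs] using hCx _ hta
      have hexp : Real.exp (-(∫ s in (t-a)..t, D s) - ∫ s in (0:ℝ)..a, β s) ≤ 1 := by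
        rw [Real.exp_le_one_iff]
        have h1 := hDnn (t-a) t (by linarith)
        have h2 := hβnn 0 a le_rfl ha.le
        linarith
      have hind : (Ioc (0:ℝ) T).indicator (fun _ => (1:ℝ)) a = 1 :=
        indicator_of_mem (show a ∈ Ioc (0:ℝ) T from ⟨ha, by linarith [ht.2]⟩) _
      rw [abs_mul, hind, mul_one]
      have : |x (t-a)| * |Real.exp (-(∫ s in (t-a)..t, D s) - ∫ s in (0:ℝ)..a, β s)| ≤ Cx * 1 :=
        mul_le_mul hxb (by rwa [abs_of_pos (Real.exp_pos _)]) (abs_nonneg _) hCx0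
      have h4 : 0 ≤ |F (a-t)| := abs_nonneg _
      linarith
  -- measurability and integrability of f t on (0,∞)
  have hfint : ∀ t ∈ Icc (0:ℝ) T, IntegrableOn (f t) (Ioi 0) := by
    intro t ht
    have hmeas : AEStronglyMeasurable (f t) (volume.restrict (Ioi 0)) := by
      have hsub : Ioi (0:ℝ) ⊆ Ioo 0 t ∪ Ici t := by
        intro a ha
        rcases lt_or_ge a t with h | h
        · exact Or.inl ⟨ha, h⟩
        · exact Or.inr h
      have h1 : AEStronglyMeasurable (f t) (volume.restrict (Ioo 0 t)) := by
        have heq : EqOn (f t)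
            (fun a => x (t-a) * Real.exp (-(Dint t - Dint (t-a)) - B a)) (Ioo 0 t) := by
          intro a ha
          rw [hf, if_neg (not_le.mpr ha.2), hDsub t a ha.1.le (by linarith [ha.2]) ht]
        have hcont : ContinuousOn
            (fun a => x (t-a) * Real.exp (-(Dint t - Dint (t-a)) - B a)) (Ioo 0 t) := by
          apply ContinuousOn.mul
          · exact hx.comp ((continuous_const.sub continuous_id).continuousOn)
              (fun a (ha : a ∈ Ioo 0 t) => show t - a ∈ Icc (0:ℝ) T from
                ⟨by linarith [ha.2], by linarith [ha.1, ht.2]⟩)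
          · apply Real.continuous_exp.comp_continuousOn
            apply ContinuousOn.sub
            · apply ContinuousOn.neg
              apply ContinuousOn.sub continuousOn_const
              exact hDc.comp ((continuous_const.sub continuous_id).continuousOn)
                (fun a (ha : a ∈ Ioo 0 t) => show t - a ∈ Icc (0:ℝ) T from
                  ⟨by linarith [ha.2], by linarith [ha.1, ht.2]⟩)
            · exact hBon.comp continuous_id.continuousOn (fun a ha => ha.1.le)
          done
        apply (hcont.aestronglyMeasurable measurableSet_Ioo).congr
        filter_upwards [ae_restrict_mem measurableSet_Ioo] with a ha
        exact (heq ha).symm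
      have h2 : AEStronglyMeasurable (f t) (volume.restrict (Ici t)) := by
        have heq : EqOn (f t) (fun a => F (a - t) * E t a) (Ici t) :=
          fun a ha => hfE t ht a ha
        have hcont : ContinuousOn
            (fun a => f₀ (a-t) * Real.exp (-Dint t - (B a - B (a - t)))) (Ici t) := by
          apply ContinuousOn.mul
          · exact hf₀c.comp ((continuous_id.sub continuous_const).continuousOn)
              (fun a (ha : t ≤ a) => by simp only [id, mem_Ici]; linarith)
          · exact hEcont t ht.1
        have heq2 : EqOn (fun a => F (a - t) * E t a)
            (fun a => f₀ (a-t) * Real.exp (-Dint t - (B a - B (a - t)))) (Ici t) := by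
          intro a (ha : t ≤ a)
          simp only []
          rw [hFeq _ (by linarith [ht.1])]
        apply (hcont.aestronglyMeasurable measurableSet_Ici).congr
        filter_upwards [ae_restrict_mem measurableSet_Ici] with a ha
        rw [heq ha, heq2 ha]
      exact (aestronglyMeasurable_union_iff.2 ⟨h1, h2⟩).mono_measure
        (Measure.restrict_mono hsub le_rfl)
    apply Integrable.mono'
      (g := fun a => |F (a - t)| + Cx * (Ioc (0:ℝ) T).indicator (fun _ => (1:ℝ)) a)
    · apply Integrable.integrableOn
      apply Integrable.add ((hFi.comp_sub_right t).abs)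
      apply Integrable.const_mul
      exact (integrable_indicator_iff measurableSet_Ioc).2
        (integrableOn_const measure_Ioc_lt_top.ne)
    · exact hmeas
    · rw [ae_restrict_iff' measurableSet_Ioi]
      exact ae_of_all _ fun a ha => by
        simpa [Real.norm_eq_abs] using hfb t ht a ha
  -- the main correction term
  set m : ℝ → ℝ → ℝ :=
    fun t => (Ici (max t t₀)).indicator (fun a => (F (a - t) - F (a - t₀)) * E t a) with hmdef
  have hm_bound : ∀ t ∈ Icc (0:ℝ) T, ∀ a : ℝ, |m t a| ≤ |F (a-t) - F (a-t₀)| := by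
    intro t ht a
    by_cases hc : a ∈ Ici (max t t₀)
    · rw [hmdef]
      simp only [indicator_of_mem hc]
      rw [abs_mul]
      have h1 : |E t a| ≤ 1 := by
        rw [abs_of_pos (hEpos t a)]
        exact hE1 t ht a (le_trans (le_max_left _ _) hc)
      calc |F (a-t) - F (a-t₀)| * |E t a| ≤ |F (a-t) - F (a-t₀)| * 1 :=
            mul_le_mul_of_nonneg_left h1 (abs_nonneg _)
      _ = |F (a-t) - F (a-t₀)| := mul_one _
    · rw [hmdef]
      simp only [indicator_of_notMem hc]
      simp [abs_nonneg]
  have hFdiff_int : ∀ t : ℝ, Integrable (fun a => |F (a - t) - F (a - t₀)|) :=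
    fun t => ((hFi.comp_sub_right t).sub (hFi.comp_sub_right t₀)).abs
  have hm_int : ∀ t ∈ Icc (0:ℝ) T, IntegrableOn (m t) (Ioi 0) := by
    intro t ht
    have hmeas : AEStronglyMeasurable (m t) volume := by
      rw [hmdef]
      apply (aestronglyMeasurable_indicator_iff measurableSet_Ici).2
      apply AEStronglyMeasurable.mul
      · exact ((hFi.comp_sub_right t).sub (hFi.comp_sub_right t₀)).aestronglyMeasurable.restrict
      · exact ((hEcont t ht.1).mono (Ici_subset_Ici.2 (le_max_left t t₀))).aestronglyMeasurable
          measurableSet_Ici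
    apply Integrable.mono' (hFdiff_int t).integrableOn hmeas.restrict
    rw [ae_restrict_iff' measurableSet_Ioi]
    exact ae_of_all _ fun a _ => by
      simpa [Real.norm_eq_abs] using hm_bound t ht a
  have hρ_int : ∀ t ∈ Icc (0:ℝ) T,
      IntegrableOn (fun a => |f t a - f t₀ a - m t a|) (Ioi 0) :=
    fun t ht => (((hfint t ht).sub (hfint t₀ ht₀)).sub (hm_int t ht)).abs
  -- the translation part tends to zero
  have hI₁ : Tendsto (fun t => ∫ a in Ioi (0:ℝ), |F (a - t) - F (a - t₀)|)
      (nhdsWithin t₀ (Icc 0 T)) (nhds 0) := by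
    have hJ : Tendsto (fun t => ∫ a, |F (a - (t - t₀)) - F a|)
        (nhdsWithin t₀ (Icc 0 T)) (nhds 0) := by
      apply (translate_L1_tendsto F hFi).comp
      have h1 : Tendsto (fun t : ℝ => t - t₀) (nhds t₀) (nhds 0) := by
        simpa using (continuous_sub_right t₀).tendsto t₀
      exact h1.mono_left nhdsWithin_le_nhds
    have hI₁eq : ∀ t : ℝ, (∫ a, |F (a - t) - F (a - t₀)|) = ∫ a, |F (a - (t - t₀)) - F a| := by
      intro t
      have h2 : (fun a => |F (a - t) - F (a - t₀)|)
          = fun a => |F ((a - t₀) - (t - t₀)) - F (a - t₀)| := by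
        funext a; ring_nf
      rw [h2]
      exact integral_sub_right_eq_self (fun a => |F (a - (t - t₀)) - F a|) t₀
    apply squeeze_zero' (Eventually.of_forall fun t => integral_nonneg fun a => abs_nonneg _)
      (g := fun t => ∫ a, |F (a - (t - t₀)) - F a|) _ hJ
    apply Eventually.of_forall
    intro t
    refine le_trans (setIntegral_le_integral (hFdiff_int t)
      (ae_of_all _ fun a => abs_nonneg _)) ?_
    exact le_of_eq (hI₁eq t)
  -- the remainder tends to zero by dominated convergence
  have hI₂ : Tendsto (fun t => ∫ a in Ioi (0:ℝ), |f t a - f t₀ a - m t a|)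
      (nhdsWithin t₀ (Icc 0 T)) (nhds 0) := by
    have hdct : Tendsto (fun t => ∫ a in Ioi (0:ℝ), |f t a - f t₀ a - m t a|)
        (nhdsWithin t₀ (Icc 0 T)) (nhds (∫ _ in Ioi (0:ℝ), (0:ℝ))) := by
      apply tendsto_integral_filter_of_dominated_convergence
        (bound := fun a => 2*|F (a - t₀)| + (2*Cx*(Ioc (0:ℝ) T).indicator (fun _ => (1:ℝ)) a
          + M*(Icc (t₀-1) (t₀+1)).indicator (fun _ => (1:ℝ)) a))
      · filter_upwards [self_mem_nhdsWithin] with t ht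
        exact (hρ_int t ht).aestronglyMeasurable
      · have hev2 : ∀ᶠ t in nhdsWithin t₀ (Icc 0 T), t ∈ Icc (t₀-1) (t₀+1) :=
          nhdsWithin_le_nhds (Icc_mem_nhds (by linarith) (by linarith))
        filter_upwards [self_mem_nhdsWithin, hev2] with t ht ht1
        filter_upwards [ae_restrict_mem measurableSet_Ioi] with a ha
        rw [mem_Ioi] at ha
        rw [Real.norm_eq_abs, abs_abs]
        have hind2 : 0 ≤ (Icc (t₀-1) (t₀+1)).indicator (fun _ => (1:ℝ)) a :=
          indicator_nonneg (fun _ _ => zero_le_one) a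
        have hFnn : 0 ≤ |F (a - t₀)| := abs_nonneg _
        have hCnn : 0 ≤ Cx * (Ioc (0:ℝ) T).indicator (fun _ => (1:ℝ)) a :=
          mul_nonneg hCx0 (hindIoc a)
        by_cases hc : max t t₀ ≤ a
        · have htle : t ≤ a := le_trans (le_max_left _ _) hc
          have h0le : t₀ ≤ a := le_trans (le_max_right _ _) hc
          have hkey : f t a - f t₀ a - m t a = F (a - t₀) * (E t a - E t₀ a) := by
            rw [hfE t ht a htle, hfE t₀ ht₀ a h0le, hmdef]
            simp only [indicator_of_mem (mem_Ici.2 hc)]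
            ring
          rw [hkey, abs_mul]
          have hEd : |E t a - E t₀ a| ≤ 2 := by
            have h1 : |E t a| ≤ 1 := by rw [abs_of_pos (hEpos t a)]; exact hE1 t ht a htle
            have h2 : |E t₀ a| ≤ 1 := by rw [abs_of_pos (hEpos t₀ a)]; exact hE1 t₀ ht₀ a h0le
            calc |E t a - E t₀ a| ≤ |E t a| + |E t₀ a| := abs_sub _ _
            _ ≤ 2 := by linarith
          have h4 := mul_le_mul_of_nonneg_left hEd hFnn
          nlinarith [mul_nonneg hM0 hind2]
        · have hma : m t a = 0 := by
            rw [hmdef]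
            exact indicator_of_notMem (by simpa using hc) _
          rw [hma, sub_zero]
          have h2 := hfb t₀ ht₀ a (mem_Ioi.2 ha)
          have h1 : |f t a| ≤ M * (Icc (t₀-1) (t₀+1)).indicator (fun _ => (1:ℝ)) a
              + Cx * (Ioc (0:ℝ) T).indicator (fun _ => (1:ℝ)) a := by
            rcases lt_or_ge a t with hat | hat
            · have h3 := hfb t ht a (mem_Ioi.2 ha)
              have h4 : F (a - t) = 0 := hFeq0 _ (by linarith)
              rw [h4, abs_zero] at h3
              have h5 := mul_nonneg hM0 hind2
              linarith
            · have hat₀ : a < t₀ := lt_of_not_ge fun hcon => hc (max_le hat hcon)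
              have hfa : f t a = F (a - t) * E t a := hfE t ht a hat
              have hFat : |F (a - t)| ≤ M := by
                rw [hFeq _ (by linarith)]
                have h6 : a - t ∈ Icc (0:ℝ) 1 := ⟨by linarith, by linarith [ht1.1]⟩
                simpa [Real.norm_eq_abs] using hM _ h6
              have hindm : (Icc (t₀-1) (t₀+1)).indicator (fun _ => (1:ℝ)) a = 1 :=
                indicator_of_mem (show a ∈ Icc (t₀-1) (t₀+1) from
                  ⟨by linarith [ht1.1], by linarith⟩) _
              rw [hfa, abs_mul, hindm]
              have hE' : |E t a| ≤ 1 := by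
                rw [abs_of_pos (hEpos t a)]; exact hE1 t ht a hat
              nlinarith [abs_nonneg (F (a - t)), abs_nonneg (E t a)]
          calc |f t a - f t₀ a| ≤ |f t a| + |f t₀ a| := abs_sub _ _
          _ ≤ _ := by linarith
      · apply Integrable.integrableOn
        apply Integrable.add
        · exact ((hFi.comp_sub_right t₀).abs).const_mul 2
        · apply Integrable.add
          · exact ((integrable_indicator_iff measurableSet_Ioc).2
              (integrableOn_const measure_Ioc_lt_top.ne)).const_mul _
          · exact ((integrable_indicator_iff measurableSet_Icc).2
              (integrableOn_const measure_Icc_lt_top.ne)).const_mul _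
      · have hne : ∀ᵐ a ∂(volume.restrict (Ioi (0:ℝ))), a ≠ t₀ := by
          apply ae_restrict_of_ae
          rw [ae_iff]
          have h0 : {a : ℝ | ¬ a ≠ t₀} = {t₀} := by ext a; simp
          rw [h0]
          exact measure_singleton t₀
        filter_upwards [hne, ae_restrict_mem measurableSet_Ioi] with a hane ha
        rw [mem_Ioi] at ha
        rcases lt_or_gt_of_ne hane with hlt | hgt
        · -- a < t₀
          have hma : ∀ t, m t a = 0 := by
            intro t
            rw [hmdef]
            exact indicator_of_notMem
              (fun h => absurd (le_trans (le_max_right t t₀) h) (not_le.2 hlt)) _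
          have hev : ∀ᶠ t in nhdsWithin t₀ (Icc 0 T), t ∈ Icc (0:ℝ) T ∧ a < t :=
            Eventually.and self_mem_nhdsWithin (nhdsWithin_le_nhds (Ioi_mem_nhds hlt))
          have hxt : Tendsto (fun t => x (t - a)) (nhdsWithin t₀ (Icc 0 T))
              (nhds (x (t₀ - a))) := by
            refine Tendsto.comp (hx (t₀ - a) ⟨by linarith, by linarith [ht₀.2]⟩) ?_
            rw [tendsto_nhdsWithin_iff]
            constructor
            · exact ((continuous_sub_right a).tendsto t₀).mono_left nhdsWithin_le_nhds
            · filter_upwards [hev] with t htt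
              exact ⟨by linarith [htt.2], by linarith [htt.1.2]⟩
          have hDt : Tendsto Dint (nhdsWithin t₀ (Icc 0 T)) (nhds (Dint t₀)) := hDc t₀ ht₀
          have hDta : Tendsto (fun t => Dint (t - a)) (nhdsWithin t₀ (Icc 0 T))
              (nhds (Dint (t₀ - a))) := by
            refine Tendsto.comp (hDc (t₀ - a) ⟨by linarith, by linarith [ht₀.2]⟩) ?_
            rw [tendsto_nhdsWithin_iff]
            constructor
            · exact ((continuous_sub_right a).tendsto t₀).mono_left nhdsWithin_le_nhds
            · filter_upwards [hev] with t htt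
              exact ⟨by linarith [htt.2], by linarith [htt.1.2]⟩
          have hcomp : Tendsto
              (fun t => x (t - a) * Real.exp (-(Dint t - Dint (t - a)) - B a))
              (nhdsWithin t₀ (Icc 0 T))
              (nhds (x (t₀ - a) * Real.exp (-(Dint t₀ - Dint (t₀ - a)) - B a))) :=
            hxt.mul ((Real.continuous_exp.tendsto _).comp
              (((hDt.sub hDta).neg).sub tendsto_const_nhds))
          have hft : Tendsto (fun t => f t a) (nhdsWithin t₀ (Icc 0 T)) (nhds (f t₀ a)) := by
            have heqt : f t₀ a = x (t₀ - a) * Real.exp (-(Dint t₀ - Dint (t₀ - a)) - B a) := by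
              rw [hf, if_neg (not_le.2 hlt), hDsub t₀ a ha.le (by linarith) ht₀]
            rw [heqt]
            apply hcomp.congr'
            filter_upwards [hev] with t htt
            rw [hf t a, if_neg (not_le.2 htt.2), hDsub t a ha.le (by linarith [htt.2]) htt.1]
          have habs := (hft.sub (tendsto_const_nhds (x := f t₀ a))).abs
          simp only [hma, sub_zero]
          simpa using habs
        · -- t₀ < a
          have hev : ∀ᶠ t in nhdsWithin t₀ (Icc 0 T), t ∈ Icc (0:ℝ) T ∧ t ≤ a := by
            apply Eventually.and self_mem_nhdsWithin
            filter_upwards [nhdsWithin_le_nhds (Iio_mem_nhds hgt)] with t htt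
            exact le_of_lt htt
          have hBat : Tendsto (fun t => B (a - t)) (nhdsWithin t₀ (Icc 0 T))
              (nhds (B (a - t₀))) := by
            refine Tendsto.comp (hBc (a - t₀) (by linarith)) ?_
            rw [tendsto_nhdsWithin_iff]
            constructor
            · exact ((continuous_const.sub continuous_id).tendsto t₀).mono_left
                nhdsWithin_le_nhds
            · filter_upwards [hev] with t htt
              exact sub_nonneg.2 htt.2
          have hDt : Tendsto Dint (nhdsWithin t₀ (Icc 0 T)) (nhds (Dint t₀)) := hDc t₀ ht₀
          have hEt : Tendsto (fun t => E t a) (nhdsWithin t₀ (Icc 0 T)) (nhds (E t₀ a)) := by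
            rw [hEdef]
            exact (Real.continuous_exp.tendsto _).comp
              (hDt.neg.sub (tendsto_const_nhds.sub hBat))
          have hmain : Tendsto (fun t => |F (a - t₀) * (E t a - E t₀ a)|)
              (nhdsWithin t₀ (Icc 0 T)) (nhds 0) := by
            have h7 := ((hEt.sub (tendsto_const_nhds (x := E t₀ a))).const_mul (F (a - t₀))).abs
            simpa using h7
          apply hmain.congr'
          filter_upwards [hev] with t htt
          have hc : max t t₀ ≤ a := max_le htt.2 hgt.le
          rw [hfE t htt.1 a htt.2, hfE t₀ ht₀ a hgt.le, hmdef]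
          simp only [indicator_of_mem (mem_Ici.2 hc)]
          congr 1
          ring
    simpa using hdct
  -- combine
  have hle : ∀ᶠ t in nhdsWithin t₀ (Icc 0 T),
      (∫ a in Ioi (0:ℝ), |f t a - f t₀ a|) ≤
      (∫ a in Ioi (0:ℝ), |F (a - t) - F (a - t₀)|) +
        ∫ a in Ioi (0:ℝ), |f t a - f t₀ a - m t a| := by
    filter_upwards [self_mem_nhdsWithin] with t ht
    have i1 : IntegrableOn (fun a => |F (a - t) - F (a - t₀)|) (Ioi 0) :=
      (hFdiff_int t).integrableOn
    have i2 := hρ_int t ht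
    calc (∫ a in Ioi (0:ℝ), |f t a - f t₀ a|)
        ≤ ∫ a in Ioi (0:ℝ), (|F (a - t) - F (a - t₀)| + |f t a - f t₀ a - m t a|) := by
          apply integral_mono_of_nonneg (ae_of_all _ fun a => abs_nonneg _) (i1.add i2)
          filter_upwards with a
          simp only [Pi.add_apply]
          have h3 := hm_bound t ht a
          calc |f t a - f t₀ a| = |m t a + (f t a - f t₀ a - m t a)| := by ring_nf
          _ ≤ |m t a| + |f t a - f t₀ a - m t a| := abs_add_le _ _
          _ ≤ _ := add_le_add h3 le_rfl
    _ = _ := integral_add i1 i2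
  apply squeeze_zero' (Eventually.of_forall fun t => integral_nonneg fun a => abs_nonneg _) hle
  simpa using hI₁.add hI₂
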